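/- For the TCCR operator T with 0 < μ < 1, one has −1 ≤ T ≤ 1 and the kernel of 1 + T equals the span of the vectors e_j ⊗ e_i − μ e_i ⊗ e_j for i < j. -/

import Mathlib

open Complex Finset

noncomputable def tccrS (d : ℕ) (μ : ℝ) :
    EuclideanSpace ℂ (Fin d × Fin d) →ₗ[ℂ] EuclideanSpace ℂ (Fin d × Fin d) where
  toFun x := WithLp.toLp 2 (fun p => if p.1 < p.2 then (μ : ℂ) * x (p.2, p.1)
    else if p.1 = p.2 then (μ : ℂ) ^ 2 * x p
    else -(1 - (μ : ℂ) ^ 2) * x p + (μ : ℂ) * x (p.2, p.1))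
  map_add' x y := by
    ext p
    simp only [PiLp.add_apply, PiLp.toLp_apply]
    split_ifs <;> ring
  map_smul' c x := by
    ext p
    simp only [PiLp.toLp_apply, PiLp.smul_apply, smul_eq_mul, RingHom.id_apply]
    split_ifs <;> ring

theorem tccrS_apply (d : ℕ) (μ : ℝ) (z : EuclideanSpace ℂ (Fin d × Fin d))
    (p : Fin d × Fin d) :
    tccrS d μ z p = if p.1 < p.2 then (μ : ℂ) * z (p.2, p.1)
      else if p.1 = p.2 then (μ : ℂ) ^ 2 * z p
      else -(1 - (μ : ℂ) ^ 2) * z p + (μ : ℂ) * z (p.2, p.1) := rfl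

set_option maxHeartbeats 1000000 in
/-- For the TCCR operator `T` with `0 < μ < 1`, one has
`-1 ≤ T ≤ 1` (i.e. `1 + T ≥ 0` and `1 - T ≥ 0`) and the kernel of `1 + T`
equals the span of the vectors `e_j ⊗ e_i - μ e_i ⊗ e_j` for `i < j`. -/
theorem tccr_T_bounds_and_ker (d : ℕ) (hd : 1 ≤ d) (μ : ℝ) (hμ0 : 0 < μ) (hμ1 : μ < 1)
    (T : EuclideanSpace ℂ (Fin d × Fin d) →L[ℂ] EuclideanSpace ℂ (Fin d × Fin d))
    (hTd : ∀ i : Fin d,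
      T (EuclideanSpace.single (i, i) (1 : ℂ)) =
        ((μ : ℂ) ^ 2) • EuclideanSpace.single (i, i) (1 : ℂ))
    (hTlt : ∀ i j : Fin d, i < j →
      T (EuclideanSpace.single (i, j) (1 : ℂ)) =
        (μ : ℂ) • EuclideanSpace.single (j, i) (1 : ℂ))
    (hTgt : ∀ i j : Fin d, j < i →
      T (EuclideanSpace.single (i, j) (1 : ℂ)) =
        (-(1 - (μ : ℂ) ^ 2)) • EuclideanSpace.single (i, j) (1 : ℂ) +
          (μ : ℂ) • EuclideanSpace.single (j, i) (1 : ℂ)) :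
    (1 + T).IsPositive ∧ (1 - T).IsPositive ∧
      LinearMap.ker (1 + T).toLinearMap =
        Submodule.span ℂ
          {v : EuclideanSpace ℂ (Fin d × Fin d) | ∃ i j : Fin d, i < j ∧
            v = EuclideanSpace.single (j, i) (1 : ℂ) -
              (μ : ℂ) • EuclideanSpace.single (i, j) (1 : ℂ)} := by
  -- T agrees with the explicit linear map `tccrS`.
  have hS : ∀ x, T x = tccrS d μ x := by
    have h : (T : EuclideanSpace ℂ (Fin d × Fin d) →ₗ[ℂ] EuclideanSpace ℂ (Fin d × Fin d))
        = tccrS d μ := by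
      apply Module.Basis.ext (EuclideanSpace.basisFun (Fin d × Fin d) ℂ).toBasis
      rintro ⟨i, j⟩
      rw [OrthonormalBasis.coe_toBasis, EuclideanSpace.basisFun_apply,
        ContinuousLinearMap.coe_coe]
      rcases lt_trichotomy i j with h | h | h
      · rw [hTlt i j h]
        ext ⟨k, l⟩
        simp only [tccrS, LinearMap.coe_mk, AddHom.coe_mk, PiLp.toLp_apply, PiLp.smul_apply, smul_eq_mul,
          EuclideanSpace.single_apply, Prod.mk.injEq]
        split_ifs <;> first | rfl | (exfalso; omega) | simp
      · subst h
        rw [hTd i]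
        ext ⟨k, l⟩
        simp only [tccrS, LinearMap.coe_mk, AddHom.coe_mk, PiLp.toLp_apply, PiLp.smul_apply, smul_eq_mul,
          EuclideanSpace.single_apply, Prod.mk.injEq]
        split_ifs <;> first | rfl | (exfalso; omega) | simp
      · rw [hTgt i j h]
        ext ⟨k, l⟩
        simp only [tccrS, LinearMap.coe_mk, AddHom.coe_mk, PiLp.toLp_apply, PiLp.add_apply, PiLp.smul_apply,
          smul_eq_mul, EuclideanSpace.single_apply, Prod.mk.injEq]
        split_ifs <;> first | rfl | (exfalso; omega) | simp
    intro x
    exact DFunLike.congr_fun h x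
  have hSapp : ∀ (z : EuclideanSpace ℂ (Fin d × Fin d)) (p : Fin d × Fin d),
      tccrS d μ z p = if p.1 < p.2 then (μ : ℂ) * z (p.2, p.1)
        else if p.1 = p.2 then (μ : ℂ) ^ 2 * z p
        else -(1 - (μ : ℂ) ^ 2) * z p + (μ : ℂ) * z (p.2, p.1) := fun z p => rfl
  -- self-adjointness of T
  have hsym : IsSelfAdjoint T := by
    rw [ContinuousLinearMap.isSelfAdjoint_iff_isSymmetric]
    intro x y
    show (inner ℂ (T x) y : ℂ) = inner ℂ x (T y)
    rw [hS, hS, PiLp.inner_apply, PiLp.inner_apply, ← sub_eq_zero,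
      ← Finset.sum_sub_distrib]
    have key : ∀ p : Fin d × Fin d,
        (inner ℂ (tccrS d μ x p) (y p) : ℂ) - inner ℂ (x p) (tccrS d μ y p)
        = (μ : ℂ) * ((starRingEnd ℂ) (x (p.2, p.1)) * y p
            - (starRingEnd ℂ) (x p) * y (p.2, p.1)) := by
      rintro ⟨i, j⟩
      rcases lt_trichotomy i j with h | h | h
      · simp [RCLike.inner_apply, hSapp, h, h.ne, h.asymm, not_lt.mpr h.le, map_mul,
          map_add, map_sub, Complex.conj_ofReal]
        ring
      · subst h
        simp [hSapp, RCLike.inner_apply, map_mul, Complex.conj_ofReal]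
        ring
      · simp [hSapp, RCLike.inner_apply, h, h.ne', h.asymm, not_lt.mpr h.le, map_mul,
          map_add, map_sub, Complex.conj_ofReal]
        ring
    rw [Finset.sum_congr rfl fun p _ => key p]
    have hsw : ∑ p : Fin d × Fin d, ((μ : ℂ) * ((starRingEnd ℂ) (x (p.2, p.1)) * y p
        - (starRingEnd ℂ) (x p) * y (p.2, p.1)))
        = ∑ p : Fin d × Fin d, ((μ : ℂ) * ((starRingEnd ℂ) (x p) * y (p.2, p.1)
        - (starRingEnd ℂ) (x (p.2, p.1)) * y p)) :=
      Fintype.sum_equiv (Equiv.prodComm (Fin d) (Fin d)) _ _ (fun p => rfl)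
    have h2 : ∑ p : Fin d × Fin d, ((μ : ℂ) * ((starRingEnd ℂ) (x p) * y (p.2, p.1)
        - (starRingEnd ℂ) (x (p.2, p.1)) * y p))
        = -∑ p : Fin d × Fin d, ((μ : ℂ) * ((starRingEnd ℂ) (x (p.2, p.1)) * y p
        - (starRingEnd ℂ) (x p) * y (p.2, p.1))) := by
      rw [← Finset.sum_neg_distrib]
      exact Finset.sum_congr rfl fun p _ => by ring
    linear_combination (hsw.trans h2) / 2
  -- positivity of 1 + T
  have hpos1 : (1 + T).IsPositive := by
    refine ContinuousLinearMap.isPositive_def'.mpr ⟨(IsSelfAdjoint.one _).add hsym, fun x => ?_⟩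
    rw [ContinuousLinearMap.reApplyInnerSelf_apply, ContinuousLinearMap.add_apply,
      ContinuousLinearMap.one_apply, hS, PiLp.inner_apply, map_sum]
    set f : Fin d × Fin d → ℝ :=
      fun p => RCLike.re (inner ℂ ((x + tccrS d μ x) p) (x p) : ℂ) with hf
    have hsw : ∑ p : Fin d × Fin d, f p = ∑ p : Fin d × Fin d, f p.swap :=
      Fintype.sum_equiv (Equiv.prodComm (Fin d) (Fin d)) _ _ (fun p => rfl)
    have hterm : ∀ p : Fin d × Fin d, 0 ≤ f p + f p.swap := by
      rintro ⟨i, j⟩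
      rcases lt_trichotomy i j with h | h | h
      · simp only [hf, Prod.swap_prod_mk, RCLike.inner_apply, PiLp.add_apply, hSapp, h,
          if_pos, h.ne, h.ne', h.asymm, not_lt.mpr h.le, if_neg, ite_false, RCLike.re_to_complex]
        set a := x (i, j); set b := x (j, i)
        simp only [map_add, map_mul, map_pow, map_sub, map_neg, map_one,
          Complex.conj_ofReal, Complex.add_re, Complex.mul_re, Complex.mul_im,
          Complex.add_im, Complex.conj_re, Complex.conj_im, Complex.ofReal_re,
          Complex.ofReal_im, Complex.sub_re, Complex.sub_im, Complex.neg_re,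
          Complex.neg_im, Complex.one_re, Complex.one_im, pow_two]
        nlinarith [sq_nonneg (a.re + μ * b.re), sq_nonneg (a.im + μ * b.im)]
      · subst h
        simp only [hf, Prod.swap_prod_mk, RCLike.inner_apply, PiLp.add_apply, hSapp,
          lt_irrefl, if_neg, if_pos, ite_false, ite_true, RCLike.re_to_complex]
        set a := x (i, i)
        simp only [map_add, map_mul, map_pow, Complex.conj_ofReal, Complex.add_re,
          Complex.mul_re, Complex.mul_im, Complex.add_im, Complex.conj_re,
          Complex.conj_im, Complex.ofReal_re, Complex.ofReal_im, pow_two]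
        nlinarith [sq_nonneg a.re, sq_nonneg a.im, sq_nonneg μ]
      · simp only [hf, Prod.swap_prod_mk, RCLike.inner_apply, PiLp.add_apply, hSapp, h,
          if_pos, h.ne, h.ne', h.asymm, not_lt.mpr h.le, if_neg, ite_false, RCLike.re_to_complex]
        set a := x (i, j); set b := x (j, i)
        simp only [map_add, map_mul, map_pow, map_sub, map_neg, map_one,
          Complex.conj_ofReal, Complex.add_re, Complex.mul_re, Complex.mul_im,
          Complex.add_im, Complex.conj_re, Complex.conj_im, Complex.ofReal_re,
          Complex.ofReal_im, Complex.sub_re, Complex.sub_im, Complex.neg_re,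
          Complex.neg_im, Complex.one_re, Complex.one_im, pow_two]
        nlinarith [sq_nonneg (b.re + μ * a.re), sq_nonneg (b.im + μ * a.im)]
    have hsum : 0 ≤ ∑ p : Fin d × Fin d, (f p + f p.swap) :=
      Finset.sum_nonneg fun p _ => hterm p
    rw [Finset.sum_add_distrib, ← hsw] at hsum
    linarith
  -- positivity of 1 - T
  have hpos2 : (1 - T).IsPositive := by
    refine ContinuousLinearMap.isPositive_def'.mpr ⟨(IsSelfAdjoint.one _).sub hsym, fun x => ?_⟩
    rw [ContinuousLinearMap.reApplyInnerSelf_apply, ContinuousLinearMap.sub_apply,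
      ContinuousLinearMap.one_apply, hS, PiLp.inner_apply, map_sum]
    set f : Fin d × Fin d → ℝ :=
      fun p => RCLike.re (inner ℂ ((x - tccrS d μ x) p) (x p) : ℂ) with hf
    have hsw : ∑ p : Fin d × Fin d, f p = ∑ p : Fin d × Fin d, f p.swap :=
      Fintype.sum_equiv (Equiv.prodComm (Fin d) (Fin d)) _ _ (fun p => rfl)
    have hterm : ∀ p : Fin d × Fin d, 0 ≤ f p + f p.swap := by
      rintro ⟨i, j⟩
      rcases lt_trichotomy i j with h | h | h
      · simp only [hf, Prod.swap_prod_mk, RCLike.inner_apply, PiLp.sub_apply, hSapp, h,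
          if_pos, h.ne, h.ne', h.asymm, not_lt.mpr h.le, if_neg, ite_false, RCLike.re_to_complex]
        set a := x (i, j); set b := x (j, i)
        simp only [map_add, map_mul, map_pow, map_sub, map_neg, map_one,
          Complex.conj_ofReal, Complex.add_re, Complex.mul_re, Complex.mul_im,
          Complex.add_im, Complex.conj_re, Complex.conj_im, Complex.ofReal_re,
          Complex.ofReal_im, Complex.sub_re, Complex.sub_im, Complex.neg_re,
          Complex.neg_im, Complex.one_re, Complex.one_im, pow_two]
        have hμμ : 0 ≤ 1 - μ * μ := by nlinarith
        nlinarith [sq_nonneg (a.re - μ * b.re), sq_nonneg (a.im - μ * b.im),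
          mul_nonneg hμμ (sq_nonneg b.re), mul_nonneg hμμ (sq_nonneg b.im)]
      · subst h
        simp only [hf, Prod.swap_prod_mk, RCLike.inner_apply, PiLp.sub_apply, hSapp,
          lt_irrefl, if_neg, if_pos, ite_false, ite_true, RCLike.re_to_complex]
        set a := x (i, i)
        simp only [map_add, map_mul, map_pow, map_sub, Complex.conj_ofReal,
          Complex.add_re, Complex.mul_re, Complex.mul_im, Complex.add_im,
          Complex.conj_re, Complex.conj_im, Complex.ofReal_re, Complex.ofReal_im,
          Complex.sub_re, Complex.sub_im, pow_two]
        have hμμ : 0 ≤ 1 - μ * μ := by nlinarith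
        nlinarith [mul_nonneg hμμ (sq_nonneg a.re), mul_nonneg hμμ (sq_nonneg a.im)]
      · simp only [hf, Prod.swap_prod_mk, RCLike.inner_apply, PiLp.sub_apply, hSapp, h,
          if_pos, h.ne, h.ne', h.asymm, not_lt.mpr h.le, if_neg, ite_false, RCLike.re_to_complex]
        set a := x (i, j); set b := x (j, i)
        simp only [map_add, map_mul, map_pow, map_sub, map_neg, map_one,
          Complex.conj_ofReal, Complex.add_re, Complex.mul_re, Complex.mul_im,
          Complex.add_im, Complex.conj_re, Complex.conj_im, Complex.ofReal_re,
          Complex.ofReal_im, Complex.sub_re, Complex.sub_im, Complex.neg_re,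
          Complex.neg_im, Complex.one_re, Complex.one_im, pow_two]
        have hμμ : 0 ≤ 1 - μ * μ := by nlinarith
        nlinarith [sq_nonneg (b.re - μ * a.re), sq_nonneg (b.im - μ * a.im),
          mul_nonneg hμμ (sq_nonneg a.re), mul_nonneg hμμ (sq_nonneg a.im)]
    have hsum : 0 ≤ ∑ p : Fin d × Fin d, (f p + f p.swap) :=
      Finset.sum_nonneg fun p _ => hterm p
    rw [Finset.sum_add_distrib, ← hsw] at hsum
    linarith
  refine ⟨hpos1, hpos2, ?_⟩
  -- kernel computation
  apply le_antisymm
  · intro x hx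
    have hx0 : x + T x = 0 := by
      have := LinearMap.mem_ker.mp hx
      simpa [ContinuousLinearMap.add_apply] using this
    have hc : ∀ p : Fin d × Fin d, x p + tccrS d μ x p = 0 := by
      intro p
      have h1 := congrArg (fun v : EuclideanSpace ℂ (Fin d × Fin d) => v p) hx0
      simpa [hS, PiLp.add_apply] using h1
    have hne : (1 : ℂ) + (μ : ℂ) ^ 2 ≠ 0 := by
      intro h
      have : ((1 + μ ^ 2 : ℝ) : ℂ) = 0 := by push_cast; linear_combination h
      rw [Complex.ofReal_eq_zero] at this
      nlinarith
    have hdiag : ∀ i : Fin d, x (i, i) = 0 := by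
      intro i
      have h1 := hc (i, i)
      rw [hSapp] at h1
      simp only [lt_irrefl, if_neg, if_pos, ite_false, ite_true] at h1
      have h2 : ((1 : ℂ) + (μ : ℂ) ^ 2) * x (i, i) = 0 := by linear_combination h1
      exact (mul_eq_zero.mp h2).resolve_left hne
    have hup : ∀ i j : Fin d, i < j → x (i, j) = -(μ : ℂ) * x (j, i) := by
      intro i j h
      have h1 := hc (i, j)
      rw [hSapp] at h1
      simp only [h, if_pos, ite_true] at h1
      linear_combination h1
    have hxeq : x = ∑ p ∈ Finset.univ.filter (fun p : Fin d × Fin d => p.2 < p.1),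
        x p • (EuclideanSpace.single p (1 : ℂ)
          - (μ : ℂ) • EuclideanSpace.single (p.2, p.1) (1 : ℂ)) := by
      ext q
      rw [WithLp.ofLp_sum, Finset.sum_apply]
      have hterm : ∀ p ∈ Finset.univ.filter (fun p : Fin d × Fin d => p.2 < p.1),
          (x p • (EuclideanSpace.single p (1 : ℂ)
            - (μ : ℂ) • EuclideanSpace.single (p.2, p.1) (1 : ℂ))) q
          = (if p = q then x p else 0)
            - (if p = (q.2, q.1) then (μ : ℂ) * x p else 0) := by
        rintro ⟨a, b⟩ hp
        have e1 : (q = ((a, b) : Fin d × Fin d)) ↔ ((a, b) : Fin d × Fin d) = q :=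
          eq_comm
        have e2 : (q = ((b, a) : Fin d × Fin d)) ↔
            ((a, b) : Fin d × Fin d) = (q.2, q.1) := by
          rw [Prod.ext_iff, Prod.ext_iff]
          constructor <;> intro hh <;> exact ⟨hh.2.symm, hh.1.symm⟩
        simp only [PiLp.sub_apply, PiLp.smul_apply, smul_eq_mul,
          EuclideanSpace.single_apply, e1, e2]
        split_ifs <;> ring
      rw [Finset.sum_congr rfl hterm, Finset.sum_sub_distrib,
        Finset.sum_ite_eq' _ q, Finset.sum_ite_eq' _ ((q.2, q.1) : Fin d × Fin d)]
      rcases lt_trichotomy q.1 q.2 with h | h | h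
      · simp only [Finset.mem_filter, Finset.mem_univ, true_and, h.asymm, if_neg, h,
          if_pos, ite_false, ite_true]
        rw [hup q.1 q.2 h]
        simp
      · simp only [Finset.mem_filter, Finset.mem_univ, true_and, h, lt_irrefl,
          ite_false]
        have : q = (q.1, q.1) := by ext <;> simp [← h]
        rw [show x q = 0 from by rw [this]; exact hdiag q.1]
        simp [h]
      · simp only [Finset.mem_filter, Finset.mem_univ, true_and, h, if_pos, h.asymm,
          if_neg, ite_true, ite_false]
        simp
    rw [hxeq]
    apply Submodule.sum_mem
    rintro ⟨a, b⟩ hp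
    rw [Finset.mem_filter] at hp
    apply Submodule.smul_mem
    apply Submodule.subset_span
    exact ⟨b, a, hp.2, rfl⟩
  · rw [Submodule.span_le]
    rintro v ⟨i, j, hij, rfl⟩
    rw [SetLike.mem_coe, LinearMap.mem_ker]
    rw [ContinuousLinearMap.coe_coe, ContinuousLinearMap.add_apply, ContinuousLinearMap.one_apply, map_sub, map_smul,
      hTgt j i hij, hTlt i j hij]
    module
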